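/- For every proof-relevant SLC-frame, the assignment P ↦ ◇P is a well-defined endofunctor of the presheaf category Psh(W) = W ⥤ Type, and it is strong: the maps σ_{P,Q,w} : P(w) × (◇Q)(w) → (◇(P×Q))(w) given by σ(p,(v,m,q)) = (v, m, (P(incl m)(p), q)) are natural in w, natural in P and Q, and satisfy the unit coherence law (σ_{⊤,Q} followed by ◇(π₂) equals π₂ : ⊤ × ◇Q ⟶ ◇Q) and the associativity coherence law (σ_{P×Q,R} followed by ◇(associator) equals the associator followed by id_P × σ_{Q,R} followed by σ_{P,Q×R}), where products of presheaves are computed pointwise. -/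

import Mathlib

open CategoryTheory

/-- A proof-relevant SLC-frame: a category `W` of worlds, a proof-relevant
modal relation `R`, an inclusion `incl` of `R` into the morphisms of `W`, and
a forward-confluence operation `factor` (split into the resulting world
`factorW`, the modal proof `factor₁` and the intuitionistic proof `factor₂`),
subject to the coherence laws. -/
structure SLCFrame where
  W : Type
  [instCat : Category.{0} W]
  R : W → W → Type
  incl : ∀ {w v : W}, R w v → (w ⟶ v)
  factorW : ∀ {w w' v : W}, (w ⟶ w') → R w v → W
  factor₁ : ∀ {w w' v : W} (i : w ⟶ w') (m : R w v), R w' (factorW i m)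
  factor₂ : ∀ {w w' v : W} (i : w ⟶ w') (m : R w v), v ⟶ factorW i m
  factorW_id : ∀ {w v : W} (m : R w v), factorW (𝟙 w) m = v
  factor₁_id : ∀ {w v : W} (m : R w v), HEq (factor₁ (𝟙 w) m) m
  factor₂_id : ∀ {w v : W} (m : R w v), HEq (factor₂ (𝟙 w) m) (𝟙 v)
  factorW_comp : ∀ {w w' w'' v : W} (i : w ⟶ w') (j : w' ⟶ w'') (m : R w v),
    factorW (i ≫ j) m = factorW j (factor₁ i m)
  factor₁_comp : ∀ {w w' w'' v : W} (i : w ⟶ w') (j : w' ⟶ w'') (m : R w v),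
    HEq (factor₁ (i ≫ j) m) (factor₁ j (factor₁ i m))
  factor₂_comp : ∀ {w w' w'' v : W} (i : w ⟶ w') (j : w' ⟶ w'') (m : R w v),
    HEq (factor₂ (i ≫ j) m) (factor₂ i m ≫ factor₂ j (factor₁ i m))
  incl_natural : ∀ {w w' v : W} (i : w ⟶ w') (m : R w v),
    incl m ≫ factor₂ i m = i ≫ incl (factor₁ i m)

attribute [instance] SLCFrame.instCat

variable (F : SLCFrame)

/-- The object part of the presheaf `◇P`: `(◇P)(w) = Σ v, (w R v) × P(v)`. -/
def DiaObj (P : F.W ⥤ Type) (w : F.W) : Type :=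
  Σ v : F.W, F.R w v × P.obj v

/-- Transport of `◇P` along `i : w ⟶ w'`, via `factor`. -/
def DiaMap (P : F.W ⥤ Type) {w w' : F.W} (i : w ⟶ w') :
    DiaObj F P w → DiaObj F P w' :=
  fun x => ⟨F.factorW i x.2.1, F.factor₁ i x.2.1, P.map (F.factor₂ i x.2.1) x.2.2⟩

/-- The action of `◇` on a natural transformation `f : P ⟶ Q`, componentwise. -/
def DiaHom {P Q : F.W ⥤ Type} (f : P ⟶ Q) (w : F.W) :
    DiaObj F P w → DiaObj F Q w :=
  fun x => ⟨x.1, x.2.1, f.app x.1 x.2.2⟩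

/-- The pointwise product of presheaves. -/
def ProdPsh (P Q : F.W ⥤ Type) : F.W ⥤ Type where
  obj w := P.obj w × Q.obj w
  map i := TypeCat.ofHom (fun x => (P.map i x.1, Q.map i x.2))
  map_id := by intro w; ext x <;> simp
  map_comp := by intro w w' w'' i j; ext x <;> simp

/-- The terminal (unit) presheaf. -/
def UnitPsh : F.W ⥤ Type where
  obj _ := PUnit
  map _ := TypeCat.ofHom (fun x => x)

/-- The strength map `σ_{P,Q,w} : P(w) × (◇Q)(w) → (◇(P × Q))(w)`. -/
def Strength (P Q : F.W ⥤ Type) (w : F.W) :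
    P.obj w × DiaObj F Q w → DiaObj F (ProdPsh F P Q) w :=
  fun x => ⟨x.2.1, x.2.2.1, (P.map (F.incl x.2.2.1) x.1, x.2.2.2)⟩

/-- The action of `×` on natural transformations, pointwise. -/
def ProdHom {P P' Q Q' : F.W ⥤ Type} (f : P ⟶ P') (g : Q ⟶ Q') :
    ProdPsh F P Q ⟶ ProdPsh F P' Q' where
  app w := TypeCat.ofHom (fun x => (f.app w x.1, g.app w x.2))
  naturality := by
    intro w w' i; ext ⟨a, b⟩
    show (f.app w' (P.map i a), g.app w' (Q.map i b)) = (P'.map i (f.app w a), Q'.map i (g.app w b))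
    exact Prod.ext (NatTrans.naturality_apply f i a) (NatTrans.naturality_apply g i b)

/-- The second projection `⊤ × Q ⟶ Q`. -/
def SndHom (Q : F.W ⥤ Type) : ProdPsh F (UnitPsh F) Q ⟶ Q where
  app _ := TypeCat.ofHom (fun x => x.2)
  naturality := by intro w w' i; rfl

/-- The associator `(P × Q) × R ⟶ P × (Q × R)`. -/
def AssocHom (P Q R : F.W ⥤ Type) :
    ProdPsh F (ProdPsh F P Q) R ⟶ ProdPsh F P (ProdPsh F Q R) where
  app _ := TypeCat.ofHom (fun x => (x.1.1, (x.1.2, x.2)))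
  naturality := by intro w w' i; rfl

/-- for every proof-relevant SLC-frame, `P ↦ ◇P` is a well-defined
strong endofunctor of the presheaf category `W ⥤ Type`: `◇P` is a presheaf,
`◇f` is a natural transformation, `◇` is functorial, and the strength maps
`σ_{P,Q}` are natural in `w`, `P` and `Q` and satisfy the unit and
associativity coherence laws. -/

lemma dia_sigma_eq (F : SLCFrame) (P : F.W ⥤ Type) {w v c c' : F.W} (h : c = c')
    (m : F.R w c) (m' : F.R w c') (hm : HEq m m') (k : v ⟶ c) (k' : v ⟶ c')
    (hk : HEq k k') (p : P.obj v) :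
    (⟨c, m, P.map k p⟩ : DiaObj F P w) = ⟨c', m', P.map k' p⟩ := by
  subst h; cases hm; cases hk; rfl

theorem dia_strong_endofunctor (F : SLCFrame) :
    -- ◇P is a presheaf: functoriality of transport
    (∀ (P : F.W ⥤ Type) (w : F.W) (x : DiaObj F P w), DiaMap F P (𝟙 w) x = x) ∧
    (∀ (P : F.W ⥤ Type) {w w' w'' : F.W} (i : w ⟶ w') (j : w' ⟶ w'')
       (x : DiaObj F P w), DiaMap F P (i ≫ j) x = DiaMap F P j (DiaMap F P i x)) ∧
    -- ◇f is a natural transformation ◇P ⟶ ◇Q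
    (∀ (P Q : F.W ⥤ Type) (f : P ⟶ Q) {w w' : F.W} (i : w ⟶ w')
       (x : DiaObj F P w), DiaMap F Q i (DiaHom F f w x) = DiaHom F f w' (DiaMap F P i x)) ∧
    -- ◇ is functorial: it preserves identities and composition
    (∀ (P : F.W ⥤ Type) (w : F.W) (x : DiaObj F P w), DiaHom F (𝟙 P) w x = x) ∧
    (∀ (P Q R : F.W ⥤ Type) (f : P ⟶ Q) (g : Q ⟶ R) (w : F.W) (x : DiaObj F P w),
       DiaHom F (f ≫ g) w x = DiaHom F g w (DiaHom F f w x)) ∧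
    -- the strength σ is natural in w
    (∀ (P Q : F.W ⥤ Type) {w w' : F.W} (i : w ⟶ w')
       (x : P.obj w × DiaObj F Q w),
       DiaMap F (ProdPsh F P Q) i (Strength F P Q w x) =
         Strength F P Q w' (P.map i x.1, DiaMap F Q i x.2)) ∧
    -- the strength σ is natural in P and Q
    (∀ (P P' Q Q' : F.W ⥤ Type) (f : P ⟶ P') (g : Q ⟶ Q') (w : F.W)
       (x : P.obj w × DiaObj F Q w),
       DiaHom F (ProdHom F f g) w (Strength F P Q w x) =
         Strength F P' Q' w (f.app w x.1, DiaHom F g w x.2)) ∧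
    -- unit coherence law: σ_{⊤,Q} ≫ ◇π₂ = π₂
    (∀ (Q : F.W ⥤ Type) (w : F.W) (x : (UnitPsh F).obj w × DiaObj F Q w),
       DiaHom F (SndHom F Q) w (Strength F (UnitPsh F) Q w x) = x.2) ∧
    -- associativity coherence law
    (∀ (P Q R : F.W ⥤ Type) (w : F.W)
       (x : (ProdPsh F P Q).obj w × DiaObj F R w),
       DiaHom F (AssocHom F P Q R) w (Strength F (ProdPsh F P Q) R w x) =
         Strength F P (ProdPsh F Q R) w (x.1.1, Strength F Q R w (x.1.2, x.2))) := by
  refine ⟨?_, ?_, ?_, ?_, ?_, ?_, ?_, ?_, ?_⟩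
  · intro P w x
    obtain ⟨v, m, p⟩ := x
    have : (⟨v, m, p⟩ : DiaObj F P w) = ⟨v, m, P.map (𝟙 v) p⟩ := by simp
    conv_rhs => rw [this]
    show (⟨F.factorW (𝟙 w) m, F.factor₁ (𝟙 w) m, P.map (F.factor₂ (𝟙 w) m) p⟩ :
      DiaObj F P w) = _
    exact dia_sigma_eq F P (F.factorW_id m) _ _ (F.factor₁_id m) _ _ (F.factor₂_id m) p
  · intro P w w' w'' i j x
    obtain ⟨v, m, p⟩ := x
    show (⟨F.factorW (i ≫ j) m, F.factor₁ (i ≫ j) m, P.map (F.factor₂ (i ≫ j) m) p⟩ : DiaObj F P w'') = (⟨F.factorW j (F.factor₁ i m), F.factor₁ j (F.factor₁ i m), P.map (F.factor₂ j (F.factor₁ i m)) (P.map (F.factor₂ i m) p)⟩ : DiaObj F P w'')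
    rw [← FunctorToTypes.map_comp_apply]
    exact dia_sigma_eq F P (F.factorW_comp i j m) _ _ (F.factor₁_comp i j m) _ _
      (F.factor₂_comp i j m) p
  · intro P Q f w w' i x
    obtain ⟨v, m, p⟩ := x
    show (⟨F.factorW i m, F.factor₁ i m, Q.map (F.factor₂ i m) (f.app v p)⟩ :
        DiaObj F Q w')
      = ⟨F.factorW i m, F.factor₁ i m, f.app _ (P.map (F.factor₂ i m) p)⟩
    rw [FunctorToTypes.naturality]
  · intro P w x; rfl
  · intro P Q R f g w x; rfl
  · intro P Q w w' i x
    obtain ⟨p, v, m, q⟩ := x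
    have h : P.map (F.factor₂ i m) (P.map (F.incl m) p)
        = P.map (F.incl (F.factor₁ i m)) (P.map i p) := by
      rw [← FunctorToTypes.map_comp_apply, ← FunctorToTypes.map_comp_apply, F.incl_natural]
    show (⟨_, _, (P.map (F.factor₂ i m) (P.map (F.incl m) p), _)⟩ :
        DiaObj F (ProdPsh F P Q) w') = _
    rw [h]; rfl
  · intro P P' Q Q' f g w x
    obtain ⟨p, v, m, q⟩ := x
    show (⟨v, m, (f.app v (P.map (F.incl m) p), g.app v q)⟩ :
        DiaObj F (ProdPsh F P' Q') w)
      = ⟨v, m, (P'.map (F.incl m) (f.app w p), g.app v q)⟩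
    rw [FunctorToTypes.naturality]
  · intro Q w x; obtain ⟨u, v, m, q⟩ := x; rfl
  · intro P Q R w x; rfl
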